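/- If Z ~ BASLG₂(α), then E(Z²) = π²(140 + 392π²α² + 155π⁴α⁴)/(7(60 + 40π²α² + 7π⁴α⁴)). -/

import Mathlib

open Real MeasureTheory Set

noncomputable def g (z : ℝ) : ℝ := Real.exp (-z) / (1 + Real.exp (-z)) ^ 2

lemma g_neg (z : ℝ) : g (-z) = g z := by
  unfold g
  rw [neg_neg, Real.exp_neg z]
  have h := (Real.exp_pos z).ne'
  have h2 : (1 + (Real.exp z)⁻¹) ≠ 0 := by positivity
  field_simp
  ring

lemma g_cont : Continuous g := by
  unfold g
  exact Real.continuous_exp.comp continuous_neg |>.div (by continuity) (fun x => by positivity)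

lemma g_nonneg (z : ℝ) : 0 ≤ g z := by unfold g; positivity

lemma g_le_exp {z : ℝ} : g z ≤ Real.exp (-z) := by
  unfold g
  rw [div_le_iff₀ (by positivity)]
  nlinarith [Real.exp_pos (-z), sq_nonneg (Real.exp (-z))]

lemma intOn_pow_exp (k : ℕ) : IntegrableOn (fun z : ℝ => z ^ k * Real.exp (-z)) (Ioi 0) := by
  have h := Real.GammaIntegral_convergent (s := (k : ℝ) + 1) (by positivity)
  rw [add_sub_cancel_right] at h
  refine (h.congr_fun (fun x hx => ?_) measurableSet_Ioi)
  dsimp only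
  rw [Real.rpow_natCast]; ring

lemma intOn_pow_exp_n (k n : ℕ) (hn : 1 ≤ n) :
    IntegrableOn (fun z : ℝ => z ^ k * Real.exp (-((n : ℝ) * z))) (Ioi 0) := by
  refine (intOn_pow_exp k).mono' ?_ ?_
  · exact ((measurable_id.pow_const k).mul ((measurable_id.const_mul _).neg.exp)).aestronglyMeasurable
  · filter_upwards [ae_restrict_mem measurableSet_Ioi] with z hz
    have hz0 : (0:ℝ) < z := hz
    rw [Real.norm_eq_abs, abs_mul, abs_of_nonneg (by positivity : (0:ℝ) ≤ z ^ k),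
      abs_of_nonneg (Real.exp_nonneg _)]
    have h1 : (1:ℝ) ≤ (n:ℝ) := by exact_mod_cast hn
    have : Real.exp (-((n:ℝ) * z)) ≤ Real.exp (-z) := by
      apply Real.exp_le_exp.2; nlinarith
    nlinarith [pow_nonneg hz0.le k, Real.exp_nonneg (-((n:ℝ)*z))]

lemma integral_pow_exp_n (k n : ℕ) (hn : 1 ≤ n) :
    ∫ z in Ioi (0:ℝ), z ^ k * Real.exp (-((n : ℝ) * z)) = (Nat.factorial k : ℝ) / (n : ℝ) ^ (k + 1) := by
  have hn' : (0:ℝ) < n := by exact_mod_cast hn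
  have h := integral_rpow_mul_exp_neg_mul_Ioi (a := (k : ℝ) + 1) (r := (n : ℝ)) (by positivity) hn'
  rw [add_sub_cancel_right] at h
  simp_rw [Real.rpow_natCast] at h
  rw [h, show ((k:ℝ)+1) = ((k+1 : ℕ):ℝ) by push_cast; ring, Real.rpow_natCast, Nat.cast_add_one,
    Real.Gamma_nat_eq_factorial k, one_div, inv_pow, ← div_eq_inv_mul]

lemma g_hasSum {z : ℝ} (hz : 0 < z) :
    HasSum (fun n : ℕ => -((n : ℝ) * (-Real.exp (-z)) ^ n)) (g z) := by
  have hr : ‖-Real.exp (-z)‖ < 1 := by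
    rw [norm_neg, Real.norm_eq_abs, abs_of_pos (Real.exp_pos _)]
    exact Real.exp_lt_one_iff.mpr (by linarith)
  have h := hasSum_coe_mul_geometric_of_norm_lt_one hr
  have he : -Real.exp (-z) / (1 - -Real.exp (-z)) ^ 2 = -(g z) := by
    unfold g; rw [sub_neg_eq_add]; ring
  rw [he] at h
  simpa using h.neg

lemma F_eq (k n : ℕ) : (fun z : ℝ => z ^ k * -((n : ℝ) * (-Real.exp (-z)) ^ n))
    = fun z => ((-1:ℝ) ^ (n + 1) * (n:ℝ)) * (z ^ k * Real.exp (-((n:ℝ) * z))) := by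
  funext z
  rw [neg_pow, ← Real.exp_nat_mul, mul_neg]
  ring

lemma F_int (k n : ℕ) :
    Integrable (fun z : ℝ => z ^ k * -((n : ℝ) * (-Real.exp (-z)) ^ n))
      (volume.restrict (Ioi 0)) := by
  rcases Nat.eq_zero_or_pos n with rfl | hn
  · simpa using integrable_zero _ _ _
  · rw [F_eq]
    exact (intOn_pow_exp_n k n hn).const_mul _

lemma integral_F (k n : ℕ) (hk : 1 ≤ k) :
    ∫ z in Ioi (0:ℝ), z ^ k * -((n : ℝ) * (-Real.exp (-z)) ^ n)
      = (-1:ℝ) ^ (n + 1) * (Nat.factorial k : ℝ) / (n:ℝ) ^ k := by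
  rcases Nat.eq_zero_or_pos n with rfl | hn
  · simp [zero_pow (show k ≠ 0 by omega)]
  · have hn0 : ((n:ℝ)) ≠ 0 := by positivity
    rw [F_eq, integral_const_mul, integral_pow_exp_n k n hn]
    field_simp
    ring

lemma integral_normF (k n : ℕ) :
    ∫ z in Ioi (0:ℝ), ‖z ^ k * -((n : ℝ) * (-Real.exp (-z)) ^ n)‖
      = (n:ℝ) * ((Nat.factorial k : ℝ) / (n:ℝ) ^ (k + 1)) := by
  rcases Nat.eq_zero_or_pos n with rfl | hn
  · simp
  · rw [setIntegral_congr_fun measurableSet_Ioi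
      (g := fun z : ℝ => (n:ℝ) * (z ^ k * Real.exp (-((n:ℝ) * z))))]
    · rw [integral_const_mul, integral_pow_exp_n k n hn]
    · intro z hz
      have hz0 : (0:ℝ) < z := hz
      have := congrFun (F_eq k n) z
      dsimp only
      rw [this, Real.norm_eq_abs, abs_mul, abs_mul, abs_mul, abs_pow, abs_neg, abs_one,
        one_pow, one_mul, abs_of_nonneg (by positivity : (0:ℝ) ≤ z ^ k),
        abs_of_nonneg (Real.exp_nonneg _), abs_of_nonneg (n.cast_nonneg : (0:ℝ) ≤ n)]

lemma summable_normF (k : ℕ) (hk : 2 ≤ k) :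
    Summable (fun n : ℕ => (n:ℝ) * ((Nat.factorial k : ℝ) / (n:ℝ) ^ (k + 1))) := by
  have h : (fun n : ℕ => (n:ℝ) * ((Nat.factorial k : ℝ) / (n:ℝ) ^ (k + 1)))
      = fun n : ℕ => (Nat.factorial k : ℝ) * (1 / (n:ℝ) ^ k) := by
    funext n
    rcases Nat.eq_zero_or_pos n with rfl | hn
    · simp [zero_pow (by omega : k ≠ 0)]
    · have hn0 : ((n:ℝ)) ≠ 0 := by positivity
      field_simp
      ring
  rw [h]
  exact (Real.summable_one_div_nat_pow.mpr (by omega)).mul_left _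

lemma moment_Ioi (k : ℕ) (hk : 2 ≤ k) :
    ∫ z in Ioi (0:ℝ), z ^ k * g z
      = ∑' n : ℕ, ((-1:ℝ) ^ (n + 1) * (Nat.factorial k : ℝ) / (n:ℝ) ^ k) := by
  have hsum : Summable fun n : ℕ =>
      ∫ z in Ioi (0:ℝ), ‖z ^ k * -((n : ℝ) * (-Real.exp (-z)) ^ n)‖ := by
    simp_rw [integral_normF k]
    exact summable_normF k hk
  have h := MeasureTheory.integral_tsum_of_summable_integral_norm (F_int k) hsum
  have h2 : ∫ z in Ioi (0:ℝ), (∑' n : ℕ, z ^ k * -((n : ℝ) * (-Real.exp (-z)) ^ n))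
      = ∫ z in Ioi (0:ℝ), z ^ k * g z := by
    refine setIntegral_congr_fun measurableSet_Ioi (fun z hz => ?_)
    exact (((g_hasSum hz).mul_left (z ^ k)).tsum_eq)
  rw [h2] at h
  rw [← h]
  congr 1
  funext n
  exact integral_F k n (by omega)


lemma bernoulli'_five : bernoulli' 5 = 0 := by
  have h1 : Nat.choose 5 2 = 10 := by decide
  have h2 : Nat.choose 5 4 = 5 := by decide
  rw [bernoulli'_def]
  norm_num [Finset.sum_range_succ, h1, h2]

lemma bernoulli'_six : bernoulli' 6 = 1 / 42 := by
  have h1 : Nat.choose 6 2 = 15 := by decide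
  have h2 : Nat.choose 6 4 = 15 := by decide
  have h3 : Nat.choose 6 5 = 6 := by decide
  rw [bernoulli'_def]
  norm_num [Finset.sum_range_succ, bernoulli'_five, h1, h2, h3]

theorem hasSum_zeta_six : HasSum (fun n : ℕ => (1 : ℝ) / (n : ℝ) ^ 6) (π ^ 6 / 945) := by
  convert hasSum_zeta_nat three_ne_zero using 1
  rw [bernoulli_eq_bernoulli'_of_ne_one (by norm_num), bernoulli'_six]
  norm_num [Nat.factorial]
  field_simp
  ring

lemma eta_hasSum (k : ℕ) (hk : 2 ≤ k) (Z : ℝ)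
    (hZ : HasSum (fun n : ℕ => 1 / (n:ℝ) ^ k) Z) :
    HasSum (fun n : ℕ => (-1:ℝ) ^ (n + 1) / (n:ℝ) ^ k) ((1 - 2 / 2 ^ k) * Z) := by
  have hE : HasSum (fun m : ℕ => if Even m then 1 / (m:ℝ) ^ k else 0) (((2:ℝ) ^ k)⁻¹ * Z) := by
    have hinj : Function.Injective (fun n : ℕ => 2 * n) := fun a b h => by
      simp only at h; omega
    rw [← Function.Injective.hasSum_iff hinj (fun x hx => ?_)]
    · have heq : ((fun m : ℕ => if Even m then 1 / (m:ℝ) ^ k else 0) ∘ fun n : ℕ => 2 * n)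
          = fun n : ℕ => ((2:ℝ) ^ k)⁻¹ * (1 / (n:ℝ) ^ k) := by
        funext n
        simp only [Function.comp_apply]
        rw [if_pos ⟨n, two_mul n⟩]
        rcases Nat.eq_zero_or_pos n with rfl | hn
        · simp [zero_pow (show k ≠ 0 by omega)]
        · have hn0 : ((n:ℝ)) ≠ 0 := by positivity
          push_cast
          rw [mul_pow]
          field_simp
      rw [heq]
      exact hZ.mul_left _
    · have hodd : ¬ Even x := by
        intro he
        rcases he with ⟨r, rfl⟩
        exact hx ⟨r, by show 2 * r = r + r; omega⟩
      simp [hodd]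
  have hA := hZ.sub (hE.mul_left 2)
  have heq2 : (fun n : ℕ => 1 / (n:ℝ) ^ k - 2 * (if Even n then 1 / (n:ℝ) ^ k else 0))
      = fun n : ℕ => (-1:ℝ) ^ (n + 1) / (n:ℝ) ^ k := by
    funext n
    rcases Nat.even_or_odd n with he | ho
    · rw [if_pos he, (he.add_one).neg_one_pow]
      ring
    · rw [if_neg (Nat.not_even_iff_odd.mpr ho), (ho.add_one).neg_one_pow]
      ring
  rw [heq2] at hA
  rw [show (1 - 2 / 2 ^ k : ℝ) * Z = Z - 2 * ((2 ^ k)⁻¹ * Z) by ring]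
  exact hA

lemma moment_Ioi_val (k : ℕ) (hk : 2 ≤ k) (Z : ℝ)
    (hZ : HasSum (fun n : ℕ => 1 / (n:ℝ) ^ k) Z) :
    ∫ z in Ioi (0:ℝ), z ^ k * g z = (Nat.factorial k : ℝ) * ((1 - 2 / 2 ^ k) * Z) := by
  rw [moment_Ioi k hk]
  have h := (eta_hasSum k hk Z hZ).mul_left (Nat.factorial k : ℝ)
  rw [← h.tsum_eq]
  congr 1
  funext n
  rw [mul_div_assoc]
  ring

lemma int_pow_g_Ioi (k : ℕ) : IntegrableOn (fun z : ℝ => z ^ k * g z) (Ioi 0) := by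
  refine (intOn_pow_exp k).mono' (((continuous_pow k).mul g_cont).aestronglyMeasurable) ?_
  filter_upwards [ae_restrict_mem measurableSet_Ioi] with z hz
  have hz0 : (0:ℝ) < z := hz
  rw [Real.norm_eq_abs, abs_mul, abs_of_nonneg (by positivity : (0:ℝ) ≤ z ^ k),
    abs_of_nonneg (g_nonneg z)]
  have := g_le_exp (z := z)
  nlinarith [pow_nonneg hz0.le k]

lemma int_pow_g (k : ℕ) : Integrable (fun z : ℝ => z ^ k * g z) := by
  have hIic : IntegrableOn (fun z : ℝ => z ^ k * g z) (Iic 0) := by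
    rw [← Measure.map_neg_eq_self (volume : Measure ℝ)]
    have m : MeasurableEmbedding fun x : ℝ => -x := (Homeomorph.neg ℝ).measurableEmbedding
    rw [m.integrableOn_map_iff]
    simp_rw [Function.comp_def, neg_preimage, neg_Iic, neg_zero]
    rw [integrableOn_Ici_iff_integrableOn_Ioi]
    have h : (fun z : ℝ => (-z) ^ k * g (-z)) = fun z => ((-1:ℝ) ^ k) * (z ^ k * g z) := by
      funext z; rw [g_neg, neg_pow]; ring
    rw [h]
    exact (int_pow_g_Ioi k).const_mul _
  rw [← integrableOn_univ, ← Iic_union_Ioi (a := (0:ℝ))]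
  exact hIic.union (int_pow_g_Ioi k)

lemma integral_even_moment (k : ℕ) (hke : Even k) :
    ∫ z : ℝ, z ^ k * g z = 2 * ∫ z in Ioi (0:ℝ), z ^ k * g z := by
  have h : (fun z : ℝ => z ^ k * g z) = fun z => |z| ^ k * g |z| := by
    funext z
    rcases abs_choice z with h | h
    · rw [h]
    · rw [h, hke.neg_pow, g_neg]
  have h2 := integral_comp_abs (f := fun x => x ^ k * g x)
  rw [← h] at h2
  exact h2

lemma integral_odd_moment (k : ℕ) (hko : Odd k) :
    ∫ z : ℝ, z ^ k * g z = 0 := by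
  have h := integral_neg_eq_self (fun z : ℝ => z ^ k * g z) volume
  have h2 : (fun x : ℝ => (-x) ^ k * g (-x)) = fun x : ℝ => -(x ^ k * g x) := by
    funext z; rw [hko.neg_pow, g_neg]; ring
  rw [h2, integral_neg] at h
  linarith

lemma moment_two : ∫ z : ℝ, z ^ 2 * g z = π ^ 2 / 3 := by
  rw [integral_even_moment 2 ⟨1, rfl⟩, moment_Ioi_val 2 le_rfl _ hasSum_zeta_two]
  norm_num [Nat.factorial]
  ring

lemma moment_four : ∫ z : ℝ, z ^ 4 * g z = 7 * π ^ 4 / 15 := by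
  rw [integral_even_moment 4 ⟨2, rfl⟩, moment_Ioi_val 4 (by norm_num) _ hasSum_zeta_four]
  norm_num [Nat.factorial]
  ring

lemma moment_six : ∫ z : ℝ, z ^ 6 * g z = 31 * π ^ 6 / 21 := by
  rw [integral_even_moment 6 ⟨3, rfl⟩, moment_Ioi_val 6 (by norm_num) _ hasSum_zeta_six]
  norm_num [Nat.factorial]
  ring

noncomputable def C₂ (α : ℝ) : ℝ := (60 + 40 * π ^ 2 * α ^ 2 + 7 * π ^ 4 * α ^ 4) / 15

noncomputable def f (z α : ℝ) : ℝ :=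
  ((1 - α * z) ^ 2 + 1) ^ 2 * Real.exp (-z) / (C₂ α * (1 + Real.exp (-z)) ^ 2)

theorem BASLG2_second_moment (α : ℝ) :
    ∫ z : ℝ, z ^ 2 * f z α
      = π ^ 2 * (140 + 392 * π ^ 2 * α ^ 2 + 155 * π ^ 4 * α ^ 4)
        / (7 * (60 + 40 * π ^ 2 * α ^ 2 + 7 * π ^ 4 * α ^ 4)) := by
  have hC : (0:ℝ) < C₂ α := by unfold C₂; positivity
  have hpt : (fun z : ℝ => z ^ 2 * f z α) = fun z : ℝ =>
      (C₂ α)⁻¹ * ((α ^ 4) * (z ^ 6 * g z) + (-(4 * α ^ 3)) * (z ^ 5 * g z)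
        + (8 * α ^ 2) * (z ^ 4 * g z) + (-(8 * α)) * (z ^ 3 * g z) + 4 * (z ^ 2 * g z)) := by
    funext z
    unfold f g
    rw [← div_mul_div_comm]
    field_simp
    ring
  rw [hpt]
  have i6 := (int_pow_g 6).const_mul (α ^ 4)
  have i5 := (int_pow_g 5).const_mul (-(4 * α ^ 3))
  have i4 := (int_pow_g 4).const_mul (8 * α ^ 2)
  have i3 := (int_pow_g 3).const_mul (-(8 * α))
  have i2 := (int_pow_g 2).const_mul (4 : ℝ)
  have i65 : Integrable (fun a : ℝ => (α ^ 4) * (a ^ 6 * g a)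
      + (-(4 * α ^ 3)) * (a ^ 5 * g a)) volume := i6.add i5
  have i654 : Integrable (fun a : ℝ => (α ^ 4) * (a ^ 6 * g a)
      + (-(4 * α ^ 3)) * (a ^ 5 * g a) + (8 * α ^ 2) * (a ^ 4 * g a)) volume := i65.add i4
  have i6543 : Integrable (fun a : ℝ => (α ^ 4) * (a ^ 6 * g a)
      + (-(4 * α ^ 3)) * (a ^ 5 * g a) + (8 * α ^ 2) * (a ^ 4 * g a)
      + (-(8 * α)) * (a ^ 3 * g a)) volume := i654.add i3
  rw [integral_const_mul]
  rw [integral_add i6543 i2, integral_add i654 i3, integral_add i65 i4, integral_add i6 i5]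
  simp only [integral_const_mul]
  rw [moment_two, moment_four, moment_six, integral_odd_moment 5 ⟨2, rfl⟩,
    integral_odd_moment 3 ⟨1, rfl⟩]
  unfold C₂
  have hden : (60 + 40 * π ^ 2 * α ^ 2 + 7 * π ^ 4 * α ^ 4) ≠ 0 := by positivity
  field_simp
  ring
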